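/- Let B_n f(x) := Σ_{i=0}^n f(i/n) C(n,i) x^i (1−x)^{n−i} be the Bernstein polynomial of f ∈ C²([0,1]). Then ‖f − B_n f‖_∞ ≤ (1/(8n)) ‖f''‖_∞. -/

import Mathlib

open MeasureTheory intervalIntegral Finset in
private lemma quad_bound_aux (f f' f'' : ℝ → ℝ) (M : ℝ)
    (hderiv : ∀ x ∈ Set.Icc (0:ℝ) 1, HasDerivAt f (f' x) x)
    (hderiv2 : ∀ x ∈ Set.Icc (0:ℝ) 1, HasDerivAt f' (f'' x) x)
    (hM : ∀ x ∈ Set.Icc (0:ℝ) 1, |f'' x| ≤ M)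
    {a b : ℝ} (ha : a ∈ Set.Icc (0:ℝ) 1) (hb : b ∈ Set.Icc (0:ℝ) 1) :
    |f b - f a - f' a * (b - a)| ≤ M/2 * (b - a)^2 := by
  have hM0 : 0 ≤ M := (abs_nonneg _).trans (hM 0 ⟨le_refl _, zero_le_one⟩)
  have hsub : Set.uIcc a b ⊆ Set.Icc (0:ℝ) 1 := by
    have h01 : Set.uIcc (0:ℝ) 1 = Set.Icc 0 1 := Set.uIcc_of_le zero_le_one
    have := Set.uIcc_subset_uIcc (h01.symm ▸ ha : a ∈ Set.uIcc (0:ℝ) 1)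
      (h01.symm ▸ hb : b ∈ Set.uIcc (0:ℝ) 1)
    rwa [h01] at this
  have hcont' : ContinuousOn f' (Set.Icc (0:ℝ) 1) := fun t ht =>
    (hderiv2 t ht).continuousAt.continuousWithinAt
  have lip : ∀ t ∈ Set.Icc (0:ℝ) 1, |f' t - f' a| ≤ M * |t - a| := by
    intro t ht
    have := Convex.norm_image_sub_le_of_norm_hasDerivWithin_le
      (f := f') (f' := f'') (s := Set.Icc (0:ℝ) 1)
      (fun y hy => (hderiv2 y hy).hasDerivWithinAt) (fun y hy => hM y hy)
      (convex_Icc 0 1) ha ht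
    simpa [Real.norm_eq_abs] using this
  have hint : IntervalIntegrable f' volume a b :=
    (hcont'.mono hsub).intervalIntegrable
  have ftc : ∫ t in a..b, f' t = f b - f a :=
    integral_eq_sub_of_hasDerivAt (fun t ht => hderiv t (hsub ht)) hint
  have e1 : f b - f a - f' a * (b - a) = ∫ t in a..b, (f' t - f' a) := by
    rw [integral_sub hint (intervalIntegrable_const), ftc, intervalIntegral.integral_const]
    simp [smul_eq_mul]; ring
  have hgint : IntervalIntegrable (fun t => M * |t - a|) volume a b := by
    apply Continuous.intervalIntegrable
    exact continuous_const.mul ((continuous_id.sub continuous_const).abs)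
  have habs : ‖∫ t in a..b, (f' t - f' a)‖ ≤ abs (∫ t in a..b, M * |t - a|) := by
    apply norm_integral_le_abs_of_norm_le _ hgint
    refine (ae_restrict_iff' measurableSet_uIoc).2 (Filter.Eventually.of_forall fun t ht => ?_)
    have : t ∈ Set.Icc (0:ℝ) 1 := hsub (Set.uIoc_subset_uIcc ht)
    simpa [Real.norm_eq_abs] using lip t this
  have hval : abs (∫ t in a..b, M * |t - a|) = M/2 * (b - a)^2 := by
    rcases le_total a b with hab | hab
    · have h1 : ∫ t in a..b, M * |t - a| = ∫ t in a..b, M * (t - a) := by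
        apply integral_congr
        intro t ht
        rw [Set.uIcc_of_le hab] at ht
        show M * |t - a| = M * (t - a)
        rw [abs_of_nonneg (sub_nonneg.2 ht.1)]
      have h2 : ∫ t in a..b, M * (t - a) = M/2 * (b - a)^2 := by
        rw [intervalIntegral.integral_const_mul, intervalIntegral.integral_comp_sub_right (fun x => x) a,
          integral_id]
        ring
      rw [h1, h2, abs_of_nonneg (by positivity)]
    · have h1 : ∫ t in a..b, M * |t - a| = ∫ t in a..b, M * (a - t) := by
        apply integral_congr
        intro t ht
        rw [Set.uIcc_of_ge hab] at ht
        show M * |t - a| = M * (a - t)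
        rw [abs_of_nonpos (sub_nonpos.2 ht.2), neg_sub]
      have h2 : ∫ t in a..b, M * (a - t) = -(M/2 * (b - a)^2) := by
        have h3 : ∫ t in a..b, (a - t) = -∫ t in a..b, (t - a) := by
          rw [← intervalIntegral.integral_neg]; congr 1; funext t; ring
        rw [intervalIntegral.integral_const_mul, h3, intervalIntegral.integral_comp_sub_right (fun x => x) a,
          integral_id]
        ring
      rw [h1, h2, abs_neg, abs_of_nonneg (by positivity)]
  calc |f b - f a - f' a * (b - a)| = ‖∫ t in a..b, (f' t - f' a)‖ := by
        rw [e1, Real.norm_eq_abs]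
    _ ≤ abs (∫ t in a..b, M * |t - a|) := habs
    _ = M/2 * (b - a)^2 := hval

/-- Bernstein polynomial approximation of a C² function: error ≤ ‖f''‖/(8n). -/
theorem bernstein_C2 (n : ℕ) (hn : 0 < n) (f f' f'' : ℝ → ℝ)
    (hderiv : ∀ x ∈ Set.Icc (0:ℝ) 1, HasDerivAt f (f' x) x)
    (hderiv2 : ∀ x ∈ Set.Icc (0:ℝ) 1, HasDerivAt f' (f'' x) x)
    (hf''c : ContinuousOn f'' (Set.Icc (0:ℝ) 1))
    (M : ℝ) (hM : ∀ x ∈ Set.Icc (0:ℝ) 1, |f'' x| ≤ M) :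
    ∀ x ∈ Set.Icc (0:ℝ) 1,
      |f x - ∑ i ∈ Finset.range (n+1),
        f ((i:ℝ)/n) * (n.choose i : ℝ) * x ^ i * (1 - x) ^ (n - i)|
        ≤ 1/(8*(n:ℝ)) * M := by
  intro x hx
  have hn' : (0:ℝ) < n := by exact_mod_cast hn
  have hnne : (n:ℝ) ≠ 0 := ne_of_gt hn'
  have hM0 : 0 ≤ M := (abs_nonneg _).trans (hM 0 ⟨le_refl _, zero_le_one⟩)
  set w : ℕ → ℝ := fun i => (n.choose i : ℝ) * x ^ i * (1 - x) ^ (n - i) with hw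
  have hwnonneg : ∀ i, 0 ≤ w i := by
    intro i
    have h1 : (0:ℝ) ≤ x := hx.1
    have h2 : (0:ℝ) ≤ 1 - x := by linarith [hx.2]
    positivity
  -- S0 : sum of weights is 1
  have S0 : ∑ i ∈ Finset.range (n+1), w i = 1 := by
    have h := bernsteinPolynomial.sum ℝ n
    apply_fun Polynomial.eval x at h
    simpa [bernsteinPolynomial, Polynomial.eval_finset_sum, hw] using h
  -- S1 : first moment
  have S1 : ∑ i ∈ Finset.range (n+1), (i:ℝ) * w i = n * x := by
    have h := bernsteinPolynomial.sum_smul ℝ n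
    apply_fun Polynomial.eval x at h
    simpa [bernsteinPolynomial, Polynomial.eval_finset_sum, hw, mul_assoc] using h
  -- S2 : variance
  have S2 : ∑ i ∈ Finset.range (n+1), ((i:ℝ)/n - x)^2 * w i = x * (1 - x) / n := by
    have h := bernsteinPolynomial.variance ℝ n
    apply_fun Polynomial.eval x at h
    simp only [bernsteinPolynomial, Polynomial.eval_finset_sum, Polynomial.eval_mul,
      Polynomial.eval_pow, Polynomial.eval_sub, Polynomial.eval_smul, Polynomial.eval_natCast,
      Polynomial.eval_X, Polynomial.eval_one, smul_eq_mul] at h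
    have key : ∀ i ∈ Finset.range (n+1),
        ((i:ℝ)/n - x)^2 * w i = (1/(n:ℝ)^2) * (((n:ℝ) * x - i)^2 * w i) := by
      intro i _
      have : ((i:ℝ)/n - x) = -(1/(n:ℝ)) * ((n:ℝ) * x - i) := by field_simp; ring
      rw [this]; ring
    rw [Finset.sum_congr rfl key, ← Finset.mul_sum]
    have hsum : ∑ i ∈ Finset.range (n+1), ((n:ℝ) * x - i)^2 * w i = (n:ℝ) * x * (1 - x) := by
      simpa [hw, mul_assoc] using h
    rw [hsum]
    field_simp
  -- Taylor bound for each node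
  have key : ∀ i ∈ Finset.range (n+1),
      |f ((i:ℝ)/n) - f x - f' x * ((i:ℝ)/n - x)| ≤ M/2 * ((i:ℝ)/n - x)^2 := by
    intro i hi
    have hi' : (i:ℝ) ≤ n := by
      have := Finset.mem_range.mp hi
      exact_mod_cast Nat.lt_succ_iff.mp this
    have hmem : (i:ℝ)/n ∈ Set.Icc (0:ℝ) 1 := by
      constructor
      · positivity
      · rw [div_le_one hn']; exact hi'
    exact quad_bound_aux f f' f'' M hderiv hderiv2 hM hx hmem
  -- expansion
  have expand : f x - ∑ i ∈ Finset.range (n+1), f ((i:ℝ)/n) * w i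
      = -∑ i ∈ Finset.range (n+1), w i * (f ((i:ℝ)/n) - f x - f' x * ((i:ℝ)/n - x)) := by
    have e : ∀ i ∈ Finset.range (n+1),
        w i * (f ((i:ℝ)/n) - f x - f' x * ((i:ℝ)/n - x))
        = f ((i:ℝ)/n) * w i - f x * w i - ((f' x / n) * ((i:ℝ) * w i) - (f' x * x) * w i) := by
      intro i _; field_simp
    have A : ∑ i ∈ Finset.range (n+1), f x * w i = f x := by
      rw [← Finset.mul_sum, S0, mul_one]
    have B : ∑ i ∈ Finset.range (n+1), f' x / n * ((i:ℝ) * w i) = f' x * x := by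
      rw [← Finset.mul_sum, S1]; field_simp
    have C : ∑ i ∈ Finset.range (n+1), f' x * x * w i = f' x * x := by
      rw [← Finset.mul_sum, S0, mul_one]
    rw [Finset.sum_congr rfl e, Finset.sum_sub_distrib, Finset.sum_sub_distrib,
      Finset.sum_sub_distrib, A, B, C]
    ring
  have hsum_eq : ∑ i ∈ Finset.range (n+1),
      f ((i:ℝ)/n) * (n.choose i : ℝ) * x ^ i * (1 - x) ^ (n - i)
      = ∑ i ∈ Finset.range (n+1), f ((i:ℝ)/n) * w i := by
    apply Finset.sum_congr rfl
    intro i _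
    rw [hw]; ring
  rw [hsum_eq, expand, abs_neg]
  calc |∑ i ∈ Finset.range (n+1), w i * (f ((i:ℝ)/n) - f x - f' x * ((i:ℝ)/n - x))|
      ≤ ∑ i ∈ Finset.range (n+1), |w i * (f ((i:ℝ)/n) - f x - f' x * ((i:ℝ)/n - x))| :=
        Finset.abs_sum_le_sum_abs _ _
    _ ≤ ∑ i ∈ Finset.range (n+1), w i * (M/2 * ((i:ℝ)/n - x)^2) := by
        apply Finset.sum_le_sum
        intro i hi
        rw [abs_mul, abs_of_nonneg (hwnonneg i)]
        exact mul_le_mul_of_nonneg_left (key i hi) (hwnonneg i)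
    _ = M/2 * (x * (1 - x) / n) := by
        rw [← S2, Finset.mul_sum]
        apply Finset.sum_congr rfl
        intro i _; ring
    _ ≤ 1/(8*(n:ℝ)) * M := by
        have hx1 : x * (1 - x) ≤ 1/4 := by nlinarith [sq_nonneg (x - 1/2)]
        have h1 : M/2 * (x * (1-x) / n) ≤ M/2 * (1/(4*n)) := by
          apply mul_le_mul_of_nonneg_left _ (by positivity)
          rw [div_le_div_iff₀ hn' (by positivity)]
          nlinarith
        have h2 : M/2 * (1/(4*(n:ℝ))) = 1/(8*(n:ℝ)) * M := by ring
        linarith
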